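/- arXiv:1305.2438 — 2 statements merged into one kernel-verified Lean document; each statement's English description precedes it below -/
import Mathlib

section
/- Every (k+1)-core is a k-shape: both its k-row shape and k-column shape are weakly decreasing sequences. -/
open Classical

structure KPartition where
  parts : ℕ → ℕ
  antitone' : ∀ i j : ℕ, i ≤ j → parts j ≤ parts i
  finite' : ∃ N : ℕ, ∀ i : ℕ, N ≤ i → parts i = 0

namespace KPartition

def empty : KPartition :=
  ⟨fun _ => 0, fun _ _ _ => le_rfl, ⟨0, fun _ _ => rfl⟩⟩

def Mem (lam : KPartition) (b : ℕ × ℕ) : Prop := b.2 < lam.parts b.1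

def Le (lam mu : KPartition) : Prop := ∀ i : ℕ, lam.parts i ≤ mu.parts i

noncomputable def conj (lam : KPartition) (j : ℕ) : ℕ :=
  @Nat.find (fun i => lam.parts i ≤ j) (Classical.decPred _)
    (by
      obtain ⟨N, hN⟩ := lam.finite'
      exact ⟨N, show lam.parts N ≤ j by rw [hN N le_rfl]; exact Nat.zero_le j⟩)

noncomputable def hook (lam : KPartition) (i j : ℕ) : ℕ :=
  (lam.parts i - j) + (lam.conj j - i) - 1

noncomputable def rsk (k : ℕ) (lam : KPartition) (i : ℕ) : ℕ :=
  Nat.card {j : ℕ | lam.Mem (i, j) ∧ lam.hook i j ≤ k}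

noncomputable def csk (k : ℕ) (lam : KPartition) (j : ℕ) : ℕ :=
  Nat.card {i : ℕ | lam.Mem (i, j) ∧ lam.hook i j ≤ k}

def IsKShape (k : ℕ) (lam : KPartition) : Prop :=
  (∀ i i' : ℕ, i ≤ i' → rsk k lam i' ≤ rsk k lam i) ∧
  (∀ j j' : ℕ, j ≤ j' → csk k lam j' ≤ csk k lam j)

def IsCore (p : ℕ) (lam : KPartition) : Prop :=
  ∀ i j : ℕ, lam.Mem (i, j) → lam.hook i j ≠ p

noncomputable def psize (lam : KPartition) : ℕ := Nat.card {b : ℕ × ℕ | lam.Mem b}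

noncomputable def intSize (k : ℕ) (lam : KPartition) : ℕ :=
  Nat.card {b : ℕ × ℕ | lam.Mem b ∧ k < lam.hook b.1 b.2}

noncomputable def bdrySize (k : ℕ) (lam : KPartition) : ℕ :=
  Nat.card {b : ℕ × ℕ | lam.Mem b ∧ lam.hook b.1 b.2 ≤ k}

noncomputable def union (lam mu : KPartition) : KPartition :=
  ⟨fun i => max (lam.parts i) (mu.parts i),
   fun i j h => max_le_max (lam.antitone' i j h) (mu.antitone' i j h),
   by
     obtain ⟨N, hN⟩ := lam.finite'
     obtain ⟨M, hM⟩ := mu.finite'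
     refine ⟨max N M, fun i hi => ?_⟩
     show max (lam.parts i) (mu.parts i) = 0
     rw [hN i (le_trans (le_max_left _ _) hi), hM i (le_trans (le_max_right _ _) hi)]
     simp⟩

end KPartition

open KPartition

def diagIdx (b : ℕ × ℕ) : ℤ := (b.2 : ℤ) - (b.1 : ℤ)

def cellDist (b b' : ℕ × ℕ) : ℕ := (diagIdx b - diagIdx b').natAbs

def Contiguous (k : ℕ) (b b' : ℕ × ℕ) : Prop :=
  cellDist b b' = k ∨ cellDist b b' = k + 1

def HasAddable (lam : KPartition) (i : ℕ) : Prop :=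
  i = 0 ∨ lam.parts i < lam.parts (i - 1)

def addCorner (lam : KPartition) (i : ℕ) : ℕ × ℕ := (i, lam.parts i)

def IsAddableCell (lam : KPartition) (b : ℕ × ℕ) : Prop :=
  HasAddable lam b.1 ∧ b.2 = lam.parts b.1

def HasRemovable (lam : KPartition) (i : ℕ) : Prop := lam.parts (i + 1) < lam.parts i

def remCorner (lam : KPartition) (i : ℕ) : ℕ × ℕ := (i, lam.parts i - 1)

def KConnectedBelow (k : ℕ) (lam : KPartition) (r r' : ℕ) : Prop :=
  r' < r ∧ HasAddable lam r ∧ HasAddable lam r' ∧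
    cellDist (addCorner lam r) (addCorner lam r') ≤ k + 1 ∧
    ∀ r'' : ℕ, r'' < r' → HasAddable lam r'' →
      ¬ cellDist (addCorner lam r) (addCorner lam r'') ≤ k + 1

def ContigConnected (k : ℕ) (lam : KPartition) (r r' : ℕ) : Prop :=
  KConnectedBelow k lam r r' ∧ Contiguous k (addCorner lam r) (addCorner lam r')

inductive InChain (k : ℕ) (lam : KPartition) (r : ℕ) : ℕ → Prop
  | refl : InChain k lam r r
  | step {s s' : ℕ} : InChain k lam r s → KConnectedBelow k lam s s' → InChain k lam r s'

noncomputable def iCC (k : ℕ) (lam : KPartition) (top bot : ℕ) (ct cb : Bool) : ℕ :=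
  Nat.card {s : ℕ | InChain k lam top s ∧ (if cb then bot ≤ s else bot < s) ∧
    (ct = true ∨ s ≠ top)}

noncomputable def rowUp (lam mu : KPartition) : ℕ := sSup {i : ℕ | lam.parts i < mu.parts i}

noncomputable def rowDown (lam mu : KPartition) : ℕ := sInf {i : ℕ | lam.parts i < mu.parts i}

noncomputable def chargeStepVal (k : ℕ) (sh : KPartition) (r r' : ℕ) : ℤ :=
  if r' ≤ r then (iCC k sh r r' true false : ℤ) else -(iCC k sh r' r false true : ℤ)

noncomputable def cochargeStepVal (k : ℕ) (sh : KPartition) (r r' : ℕ) : ℤ :=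
  if r' < r then -(iCC k sh r r' false false : ℤ) else (iCC k sh r' r true true : ℤ)

noncomputable def chargeLet (k : ℕ) (T : ℕ → KPartition) : ℕ → ℤ
  | 0 => 0
  | 1 => 0
  | n + 2 =>
    chargeLet k T (n + 1) +
      chargeStepVal k (T (n + 1)) (rowUp (T n) (T (n + 1)) + 1)
        (rowUp (T (n + 1)) (T (n + 2)))

noncomputable def cochargeLet (k : ℕ) (T : ℕ → KPartition) : ℕ → ℤ
  | 0 => 0
  | 1 => 0
  | n + 2 =>
    cochargeLet k T (n + 1) +
      cochargeStepVal k (T (n + 1)) (rowDown (T n) (T (n + 1)) + 1)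
        (rowDown (T (n + 1)) (T (n + 2)))

noncomputable def chargeTab (k : ℕ) (T : ℕ → KPartition) (N : ℕ) : ℤ :=
  ∑ n ∈ Finset.range N, chargeLet k T (n + 1)

noncomputable def cochargeTab (k : ℕ) (T : ℕ → KPartition) (N : ℕ) : ℤ :=
  ∑ n ∈ Finset.range N, cochargeLet k T (n + 1)

def skewSet (lam mu : KPartition) : Set (ℕ × ℕ) := {b | mu.Mem b ∧ ¬ lam.Mem b}

def IsStringOf (k : ℕ) (lam mu : KPartition) (ℓ : ℕ) (a : ℕ → ℕ × ℕ) : Prop :=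
  KPartition.Le lam mu ∧
  (∀ b : ℕ × ℕ, b ∈ skewSet lam mu ↔ ∃ i < ℓ, a i = b) ∧
  (∀ i j : ℕ, i < ℓ → j < ℓ → a i = a j → i = j) ∧
  (∀ i : ℕ, i + 1 < ℓ → (a (i + 1)).1 < (a i).1 ∧ Contiguous k (a i) (a (i + 1)))

def IsRowTypeStringOf (k : ℕ) (lam mu : KPartition) (ℓ : ℕ) (a : ℕ → ℕ × ℕ) : Prop :=
  IsStringOf k lam mu ℓ a ∧ ∀ i : ℕ, rsk k mu i = rsk k lam i

def IsColTypeStringOf (k : ℕ) (lam mu : KPartition) (ℓ : ℕ) (a : ℕ → ℕ × ℕ) : Prop :=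
  IsStringOf k lam mu ℓ a ∧ ∀ j : ℕ, csk k mu j = csk k lam j

def TranslateBy (v : ℤ × ℤ) (b b' : ℕ × ℕ) : Prop :=
  (b'.1 : ℤ) = (b.1 : ℤ) + v.1 ∧ (b'.2 : ℤ) = (b.2 : ℤ) + v.2

def IsRowMove (k ℓ r : ℕ) (lam mu : KPartition) : Prop :=
  1 ≤ r ∧ 1 ≤ ℓ ∧ IsKShape k lam ∧ IsKShape k mu ∧
  ∃ (c : ℕ → KPartition) (a : ℕ → ℕ → ℕ × ℕ),
    c 0 = lam ∧ c r = mu ∧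
    (∀ i < r, IsRowTypeStringOf k (c i) (c (i + 1)) ℓ (a i)) ∧
    (∀ i < r, ∃ v : ℤ × ℤ, ∀ t < ℓ, TranslateBy v (a 0 t) (a i t)) ∧
    (∀ i : ℕ, i + 1 < r → (a (i + 1) 0).2 = (a i 0).2 + 1)

def IsColMove (k ℓ r : ℕ) (lam mu : KPartition) : Prop :=
  1 ≤ r ∧ 1 ≤ ℓ ∧ IsKShape k lam ∧ IsKShape k mu ∧
  ∃ (c : ℕ → KPartition) (a : ℕ → ℕ → ℕ × ℕ),
    c 0 = lam ∧ c r = mu ∧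
    (∀ i < r, IsColTypeStringOf k (c i) (c (i + 1)) ℓ (a i)) ∧
    (∀ i < r, ∃ v : ℤ × ℤ, ∀ t < ℓ, TranslateBy v (a 0 t) (a i t)) ∧
    (∀ i : ℕ, i + 1 < r → (a (i + 1) (ℓ - 1)).1 = (a i (ℓ - 1)).1 + 1)

def IsMoveOf (k ℓ r : ℕ) (isRow : Bool) (lam mu : KPartition) : Prop :=
  if isRow then IsRowMove k ℓ r lam mu else IsColMove k ℓ r lam mu

def MoveRel (k : ℕ) (lam mu : KPartition) : Prop :=
  ∃ ℓ r : ℕ, IsRowMove k ℓ r lam mu ∨ IsColMove k ℓ r lam mu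

def IsCover (k : ℕ) (lam mu : KPartition) : Prop :=
  IsKShape k lam ∧ IsKShape k mu ∧
  ∃ (ℓ : ℕ) (a : ℕ → ℕ × ℕ), 1 ≤ ℓ ∧ IsStringOf k lam mu ℓ a ∧
    (∃ i : ℕ, rsk k lam i < rsk k mu i) ∧ (∃ j : ℕ, csk k lam j < csk k mu j)

noncomputable def topCellC (lam mu : KPartition) : ℕ × ℕ :=
  (rowUp lam mu, lam.parts (rowUp lam mu))

noncomputable def botCellC (lam mu : KPartition) : ℕ × ℕ :=
  (rowDown lam mu, lam.parts (rowDown lam mu))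

def CanContinueBelow (k : ℕ) (lam mu : KPartition) : Prop :=
  ∃ i : ℕ, HasAddable lam i ∧ i < rowDown lam mu ∧
    Contiguous k (botCellC lam mu) (addCorner lam i)

def CanContinueAbove (k : ℕ) (lam mu : KPartition) : Prop :=
  ∃ i : ℕ, HasAddable lam i ∧ rowUp lam mu < i ∧
    Contiguous k (addCorner lam i) (topCellC lam mu)

def RevContinueBelow (k : ℕ) (lam mu : KPartition) : Prop :=
  ∃ i : ℕ, HasRemovable mu i ∧ i < rowDown lam mu ∧
    Contiguous k (botCellC lam mu) (remCorner mu i)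

def RevContinueAbove (k : ℕ) (lam mu : KPartition) : Prop :=
  ∃ i : ℕ, HasRemovable mu i ∧ rowUp lam mu < i ∧
    Contiguous k (remCorner mu i) (topCellC lam mu)

def IsMaximalCover (k : ℕ) (lam mu : KPartition) : Prop :=
  IsCover k lam mu ∧ ¬ CanContinueAbove k lam mu ∧ ¬ CanContinueBelow k lam mu

def IsReverseMaximalCover (k : ℕ) (lam mu : KPartition) : Prop :=
  IsCover k lam mu ∧ ¬ RevContinueAbove k lam mu ∧ ¬ RevContinueBelow k lam mu

def StdKShapeTableau (k N : ℕ) (T : ℕ → KPartition) : Prop :=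
  T 0 = KPartition.empty ∧ ∀ n < N, IsCover k (T n) (T (n + 1))

def HorizStrip (lam mu : KPartition) : Prop :=
  KPartition.Le lam mu ∧ ∀ j : ℕ, mu.conj j ≤ lam.conj j + 1

def VertStrip (lam mu : KPartition) : Prop :=
  KPartition.Le lam mu ∧ ∀ i : ℕ, mu.parts i ≤ lam.parts i + 1

def IsStdKTableau (k N : ℕ) (T : ℕ → KPartition) : Prop :=
  T 0 = KPartition.empty ∧ (∀ n ≤ N, IsCore (k + 1) (T n)) ∧
  ∀ n < N, HorizStrip (T n) (T (n + 1)) ∧ VertStrip (T n) (T (n + 1)) ∧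
    bdrySize k (T (n + 1)) = bdrySize k (T n) + 1

def cellResidue (k : ℕ) (b : ℕ × ℕ) : ZMod (k + 1) :=
  (b.2 : ZMod (k + 1)) - (b.1 : ZMod (k + 1))

def GroundPos (lam : KPartition) (i j : ℕ) : Prop :=
  1 ≤ i ∧ lam.parts i ≤ j ∧ j < lam.parts (i - 1)

noncomputable def diagCount (k : ℕ) (e : ZMod (k + 1)) (b b' : ℕ × ℕ) : ℕ :=
  Nat.card {d : ℤ | min (diagIdx b) (diagIdx b') < d ∧
    d < max (diagIdx b) (diagIdx b') ∧ (d : ZMod (k + 1)) = e}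

noncomputable def upCell (lam mu : KPartition) : ℕ × ℕ :=
  (rowUp lam mu, lam.parts (rowUp lam mu))

def shiftU (S : Set (ℕ × ℕ)) : Set (ℕ × ℕ) := (fun b => (b.1 + 1, b.2)) '' S

namespace KPartition

-- auxiliary development

lemma parts_conj_le (lam : KPartition) (j : ℕ) : lam.parts (lam.conj j) ≤ j :=
  @Nat.find_spec (fun i => lam.parts i ≤ j) (Classical.decPred _) _

lemma conj_le_of (lam : KPartition) {i j : ℕ} (h : lam.parts i ≤ j) : lam.conj j ≤ i :=
  @Nat.find_min' (fun i => lam.parts i ≤ j) (Classical.decPred _) _ i h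

lemma conj_le_iff (lam : KPartition) {i j : ℕ} : lam.conj j ≤ i ↔ lam.parts i ≤ j := by
  constructor
  · intro h; exact le_trans (lam.antitone' _ _ h) (lam.parts_conj_le j)
  · exact lam.conj_le_of

lemma lt_conj_iff (lam : KPartition) {i j : ℕ} : i < lam.conj j ↔ j < lam.parts i := by
  rw [← not_le, ← not_le, conj_le_iff]

lemma conj_anti (lam : KPartition) {j j' : ℕ} (h : j ≤ j') : lam.conj j' ≤ lam.conj j :=
  lam.conj_le_of (le_trans (lam.parts_conj_le j) h)

noncomputable def bZ (lam : KPartition) (i : ℕ) : ℤ := (lam.parts i : ℤ) - i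

noncomputable def mZ (lam : KPartition) (j : ℕ) : ℤ := (j : ℤ) + 1 - lam.conj j

def InB (lam : KPartition) (c : ℤ) : Prop := ∃ i, lam.bZ i = c

lemma mZ_lt_bZ (lam : KPartition) {i j : ℕ} (h : j < lam.parts i) :
    lam.mZ j < lam.bZ i := by
  have h2 : i < lam.conj j := lam.lt_conj_iff.2 h
  simp only [mZ, bZ]; omega

lemma bZ_lt_mZ (lam : KPartition) {i j : ℕ} (h : lam.parts i ≤ j) :
    lam.bZ i < lam.mZ j := by
  have h2 : lam.conj j ≤ i := lam.conj_le_iff.2 h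
  simp only [mZ, bZ]; omega

lemma mZ_lt_bZ_iff (lam : KPartition) {i j : ℕ} : lam.mZ j < lam.bZ i ↔ j < lam.parts i := by
  constructor
  · intro h; by_contra hc; exact absurd (lam.bZ_lt_mZ (not_lt.1 hc)) (by omega)
  · exact lam.mZ_lt_bZ

lemma mZ_strictMono (lam : KPartition) : StrictMono lam.mZ := by
  apply strictMono_nat_of_lt_succ
  intro j
  have h : lam.conj (j + 1) ≤ lam.conj j := lam.conj_anti (by omega)
  simp only [mZ]; push_cast; omega

lemma mZ_ne_bZ (lam : KPartition) (i j : ℕ) : lam.bZ i ≠ lam.mZ j := by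
  rcases lt_or_ge j (lam.parts i) with h | h
  · have := lam.mZ_lt_bZ h; omega
  · have := lam.bZ_lt_mZ h; omega

lemma InB_of_low (lam : KPartition) {c : ℤ} (h : c < lam.mZ 0) : lam.InB c := by
  have h0 : c ≤ -(lam.conj 0 : ℤ) := by simp only [mZ] at h; push_cast at h; omega
  refine ⟨(-c).toNat, ?_⟩
  have hge : (lam.conj 0 : ℤ) ≤ (-c).toNat := by omega
  have hp : lam.parts ((-c).toNat) = 0 := by
    have := le_trans (lam.antitone' _ _ (by exact_mod_cast hge)) (lam.parts_conj_le 0)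
    omega
  simp only [bZ, hp]; omega

lemma InB_of_gap (lam : KPartition) {c : ℤ} {j : ℕ} (h1 : lam.mZ j < c)
    (h2 : c < lam.mZ (j + 1)) : lam.InB c := by
  have hcj : c ≤ (j : ℤ) + 1 := by
    simp only [mZ] at h2; push_cast at h2; omega
  set i := ((j : ℤ) + 1 - c).toNat with hi
  have hic : (i : ℤ) = (j : ℤ) + 1 - c := by omega
  have hconj1 : lam.conj (j + 1) ≤ i := by
    simp only [mZ] at h2; push_cast at h2; omega
  have hconj2 : (i : ℤ) < lam.conj j := by
    simp only [mZ] at h1; push_cast at h1; omega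
  have hle : lam.parts i ≤ j + 1 := lam.conj_le_iff.1 hconj1
  have hgt : j < lam.parts i := lam.lt_conj_iff.1 (by exact_mod_cast hconj2)
  have hp : lam.parts i = j + 1 := by omega
  exact ⟨i, by simp only [bZ, hp]; omega⟩

lemma exists_mZ_eq (lam : KPartition) {c : ℤ} (h : ¬ lam.InB c) : ∃ j, lam.mZ j = c := by
  have h0 : lam.mZ 0 ≤ c := by
    by_contra hc; exact h (lam.InB_of_low (not_le.1 hc))
  have hm0 : lam.mZ 0 = 1 - (lam.conj 0 : ℤ) := by simp [mZ]
  have hex : ∃ j : ℕ, c < lam.mZ j := by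
    refine ⟨(c + lam.conj 0).toNat, ?_⟩
    have hmono : ∀ j : ℕ, (j : ℤ) + lam.mZ 0 ≤ lam.mZ j := by
      intro j
      induction j with
      | zero => simp
      | succ n ih =>
        have h : lam.mZ n < lam.mZ (n + 1) := lam.mZ_strictMono (by omega)
        push_cast; omega
    have := hmono (c + lam.conj 0).toNat
    omega
  obtain ⟨J, hJ1, hJ2⟩ : ∃ J, c < lam.mZ J ∧ ∀ j < J, ¬ c < lam.mZ j :=
    ⟨Nat.find hex, Nat.find_spec hex, fun j hj => Nat.find_min hex hj⟩
  match J, hJ1, hJ2 with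
  | 0, hJ1, _ => omega
  | j + 1, hJ1, hJ2 =>
    have hle : lam.mZ j ≤ c := not_lt.1 (hJ2 j (by omega))
    rcases eq_or_lt_of_le hle with heq | hlt
    · exact ⟨j, heq⟩
    · exact absurd (lam.InB_of_gap hlt hJ1) h

lemma hook_cast (lam : KPartition) {i j : ℕ} (h : j < lam.parts i) :
    (lam.hook i j : ℤ) = lam.bZ i - lam.mZ j := by
  have h2 : i < lam.conj j := lam.lt_conj_iff.2 h
  simp only [hook, bZ, mZ]
  omega

lemma InB_closure (lam : KPartition) {k : ℕ} (hcore : IsCore (k + 1) lam) {c : ℤ}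
    (hc : lam.InB c) : lam.InB (c - (k + 1)) := by
  obtain ⟨i, rfl⟩ := hc
  by_contra hne
  obtain ⟨j, hj⟩ := lam.exists_mZ_eq hne
  have hlt : lam.mZ j < lam.bZ i := by omega
  have hmem : j < lam.parts i := lam.mZ_lt_bZ_iff.1 hlt
  have hcast := lam.hook_cast hmem
  have : lam.hook i j = k + 1 := by omega
  exact hcore i j hmem this

lemma InB_closure_mul (lam : KPartition) {k : ℕ} (hcore : IsCore (k + 1) lam) {c : ℤ}
    (hc : lam.InB c) : ∀ s : ℕ, lam.InB (c - (k + 1) * s)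
  | 0 => by simpa using hc
  | s + 1 => by
    have := lam.InB_closure hcore (lam.InB_closure_mul hcore hc s)
    have he : c - (k + 1) * (s + 1 : ℕ) = (c - (k + 1) * s) - (k + 1) := by push_cast; ring
    rw [he]; exact this

noncomputable def W (lam : KPartition) (k : ℕ) (β : ℤ) : Set ℤ :=
  {c | β - (k + 1) < c ∧ c < β ∧ ¬ lam.InB c}

lemma W_finite (lam : KPartition) (k : ℕ) (β : ℤ) : (lam.W k β).Finite :=
  (Set.finite_Ioo (β - (k+1)) β).subset (fun c hc => ⟨hc.1, hc.2.1⟩)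

lemma rsk_eq_card_W (lam : KPartition) (k i : ℕ) :
    rsk k lam i = Nat.card (lam.W k (lam.bZ i)) := by
  have himg : lam.W k (lam.bZ i) = lam.mZ '' {j : ℕ | lam.Mem (i, j) ∧ lam.hook i j ≤ k} := by
    ext c
    constructor
    · rintro ⟨h1, h2, h3⟩
      obtain ⟨j, rfl⟩ := lam.exists_mZ_eq h3
      have hmem : j < lam.parts i := lam.mZ_lt_bZ_iff.1 h2
      have hcast := lam.hook_cast hmem
      exact ⟨j, ⟨hmem, by omega⟩, rfl⟩
    · rintro ⟨j, ⟨hmem, hhk⟩, rfl⟩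
      have hmem' : j < lam.parts i := hmem
      have hcast := lam.hook_cast hmem'
      refine ⟨by omega, lam.mZ_lt_bZ hmem', ?_⟩
      rintro ⟨i', hi'⟩
      exact lam.mZ_ne_bZ i' j hi'
  rw [rsk, himg, Nat.card_coe_set_eq, Nat.card_coe_set_eq,
    Set.ncard_image_of_injOn (lam.mZ_strictMono.injective.injOn)]

lemma card_W_mono (lam : KPartition) {k : ℕ} (hcore : IsCore (k + 1) lam) {β β' : ℤ}
    (hβ : lam.InB β) (hle : β' ≤ β) :
    Nat.card (lam.W k β') ≤ Nat.card (lam.W k β) := by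
  set Φ : ℤ → ℤ := fun c => c + (k + 1) * ((β - 1 - c) / (k + 1)) with hΦ
  have hk1 : (0:ℤ) < (k:ℤ) + 1 := by positivity
  have hkey : ∀ c ∈ lam.W k β', Φ c ∈ lam.W k β := by
    rintro c ⟨h1, h2, h3⟩
    have hnn : 0 ≤ β - 1 - c := by omega
    have hdm := Int.mul_ediv_add_emod (β - 1 - c) ((k:ℤ) + 1)
    set q := (β - 1 - c) / ((k:ℤ) + 1) with hq
    set r := (β - 1 - c) % ((k:ℤ) + 1) with hr
    have hmod : β - 1 - Φ c = r := by simp only [hΦ]; linarith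
    have hmodlt : r < (k:ℤ) + 1 := Int.emod_lt_of_pos _ hk1
    have hmodge : 0 ≤ r := Int.emod_nonneg _ (by omega)
    have hdnn : 0 ≤ q := Int.ediv_nonneg hnn (by omega)
    have hqq : (q.toNat : ℤ) = q := Int.toNat_of_nonneg hdnn
    have hne : r ≠ (k:ℤ) := by
      intro hbad
      apply h3
      have hce : c = β - ((k:ℤ) + 1) * ((q.toNat : ℤ) + 1) := by
        have hexp : ((k:ℤ) + 1) * ((q.toNat : ℤ) + 1) = ((k:ℤ) + 1) * q + ((k:ℤ) + 1) := by
          rw [hqq]; ring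
        linarith
      have hInB := lam.InB_closure_mul hcore hβ (q.toNat + 1)
      have hcast : ((q.toNat + 1 : ℕ) : ℤ) = (q.toNat : ℤ) + 1 := by push_cast; ring
      rw [hce, ← hcast]; exact hInB
    have hnB : ¬ lam.InB (Φ c) := by
      intro hB
      apply h3
      have hs : Φ c - ((k:ℤ) + 1) * (q.toNat : ℤ) = c := by
        simp only [hΦ]; rw [hqq]; ring
      have hInB := lam.InB_closure_mul hcore hB q.toNat
      rwa [hs] at hInB
    exact ⟨by omega, by omega, hnB⟩
  have hinj : Set.InjOn Φ (lam.W k β') := by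
    rintro c₁ ⟨ha1, ha2, _⟩ c₂ ⟨hb1, hb2, _⟩ heq
    simp only [hΦ] at heq
    set q₁ := (β - 1 - c₁) / ((k:ℤ) + 1)
    set q₂ := (β - 1 - c₂) / ((k:ℤ) + 1)
    have hdiff : c₁ - c₂ = ((k:ℤ) + 1) * (q₂ - q₁) := by
      have : ((k:ℤ) + 1) * (q₂ - q₁) = ((k:ℤ) + 1) * q₂ - ((k:ℤ) + 1) * q₁ := by ring
      linarith
    rcases lt_trichotomy (q₂ - q₁) 0 with hlt | heq0 | hgt
    · have : ((k:ℤ) + 1) * (q₂ - q₁) ≤ ((k:ℤ) + 1) * (-1) :=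
        mul_le_mul_of_nonneg_left (by omega) (le_of_lt hk1)
      linarith
    · rw [heq0, mul_zero] at hdiff; omega
    · have : ((k:ℤ) + 1) * 1 ≤ ((k:ℤ) + 1) * (q₂ - q₁) :=
        mul_le_mul_of_nonneg_left (by omega) (le_of_lt hk1)
      linarith
  calc Nat.card (lam.W k β') = (lam.W k β').ncard := (Nat.card_coe_set_eq _)
    _ = (Φ '' (lam.W k β')).ncard := (Set.ncard_image_of_injOn hinj).symm
    _ ≤ (lam.W k β).ncard := Set.ncard_le_ncard (Set.image_subset_iff.2 hkey)
        (lam.W_finite k β)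
    _ = Nat.card (lam.W k β) := (Nat.card_coe_set_eq _).symm

lemma rsk_anti (lam : KPartition) {k : ℕ} (hcore : IsCore (k + 1) lam) :
    ∀ i i' : ℕ, i ≤ i' → rsk k lam i' ≤ rsk k lam i := by
  intro i i' hii
  rw [lam.rsk_eq_card_W, lam.rsk_eq_card_W]
  apply lam.card_W_mono hcore ⟨i, rfl⟩
  have := lam.antitone' i i' hii
  simp only [bZ]; omega

-- conjugate partition

noncomputable def conjP (lam : KPartition) : KPartition :=
  ⟨lam.conj, fun _ _ h => lam.conj_anti h,
   ⟨lam.parts 0, fun j hj => Nat.le_zero.1 (lam.conj_le_of (le_trans (lam.antitone' 0 0 le_rfl) hj))⟩⟩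

lemma conjP_parts (lam : KPartition) (j : ℕ) : lam.conjP.parts j = lam.conj j := rfl

lemma conjP_conj (lam : KPartition) (i : ℕ) : lam.conjP.conj i = lam.parts i := by
  apply le_antisymm
  · exact lam.conjP.conj_le_of (show lam.conj (lam.parts i) ≤ i from lam.conj_le_of le_rfl)
  · have := lam.conjP.parts_conj_le i
    exact lam.conj_le_iff.1 this

lemma conjP_mem (lam : KPartition) (i j : ℕ) : lam.conjP.Mem (j, i) ↔ lam.Mem (i, j) := by
  show i < lam.conj j ↔ j < lam.parts i
  exact lam.lt_conj_iff

lemma conjP_hook (lam : KPartition) (i j : ℕ) : lam.conjP.hook j i = lam.hook i j := by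
  simp only [hook, conjP_parts, conjP_conj]
  omega

lemma conjP_core (lam : KPartition) {p : ℕ} (h : IsCore p lam) : IsCore p lam.conjP := by
  intro j i hmem
  rw [lam.conjP_hook]
  exact h i j ((lam.conjP_mem i j).1 hmem)

lemma csk_eq_rsk_conjP (lam : KPartition) (k j : ℕ) : csk k lam j = rsk k lam.conjP j := by
  have hset : {i : ℕ | lam.Mem (i, j) ∧ lam.hook i j ≤ k} =
      {i : ℕ | lam.conjP.Mem (j, i) ∧ lam.conjP.hook j i ≤ k} := by
    ext i
    simp only [Set.mem_setOf_eq, lam.conjP_mem, lam.conjP_hook]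
  unfold csk rsk
  rw [hset]

end KPartition

/-- Every (k+1)-core is a k-shape. -/
theorem kp1core_is_kshape (k : ℕ) (hk : 2 ≤ k) (lam : KPartition)
    (h : IsCore (k + 1) lam) : IsKShape k lam := by
  constructor
  · exact lam.rsk_anti h
  · intro j j' hjj
    rw [lam.csk_eq_rsk_conjP, lam.csk_eq_rsk_conjP]
    exact lam.conjP.rsk_anti (lam.conjP_core h) j j' hjj
end

section
/- Two rows of a (k+1)-core are (k+1)-connected if and only if they are k-connected; consequently, the cocharge (and charge) of a standard k-tableau is the same whether the tableau is considered as a sequence of k-shapes or as a sequence of (k+1)-shapes. -/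
open Classical

open KPartition

lemma dist_ne_aux (k : ℕ) (lam : KPartition) (hcore : IsCore (k + 1) lam)
    {r r' : ℕ} (hlt : r' < r) (ha : HasAddable lam r) :
    cellDist (addCorner lam r) (addCorner lam r') ≠ k + 2 := by
  have hr : r ≠ 0 := by omega
  have ha2 : lam.parts r < lam.parts (r - 1) := ha.resolve_left hr
  have h1 : lam.parts r < lam.parts r' :=
    lt_of_lt_of_le ha2 (lam.antitone' r' (r - 1) (by omega))
  have hconj : lam.conj (lam.parts r) = r := by
    unfold KPartition.conj
    have hins : (Classical.decPred fun i => lam.parts i ≤ lam.parts r)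
        = fun a => Nat.decLe (lam.parts a) (lam.parts r) := Subsingleton.elim _ _
    rw [hins]
    apply le_antisymm
    · exact Nat.find_le le_rfl
    · apply (Nat.le_find_iff _ _).2
      intro m hm hle
      have : lam.parts (r - 1) ≤ lam.parts m := lam.antitone' m (r - 1) (by omega)
      omega
  have hhook := hcore r' (lam.parts r) h1
  unfold KPartition.hook at hhook
  rw [hconj] at hhook
  intro hd
  simp only [cellDist, diagIdx, addCorner] at hd
  omega

lemma kcb_iff (k : ℕ) (lam : KPartition) (hcore : IsCore (k + 1) lam) (r r' : ℕ) :
    KConnectedBelow k lam r r' ↔ KConnectedBelow (k + 1) lam r r' := by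
  constructor
  · rintro ⟨h1, h2, h3, h4, h5⟩
    refine ⟨h1, h2, h3, by omega, fun r'' hlt hadd hle => ?_⟩
    have hne := dist_ne_aux k lam hcore (show r'' < r by omega) h2
    exact h5 r'' hlt hadd (by omega)
  · rintro ⟨h1, h2, h3, h4, h5⟩
    have hne := dist_ne_aux k lam hcore h1 h2
    refine ⟨h1, h2, h3, by omega, fun r'' hlt hadd hle => ?_⟩
    exact h5 r'' hlt hadd (by omega)

lemma inchain_iff (k : ℕ) (lam : KPartition) (hcore : IsCore (k + 1) lam) (r s : ℕ) :
    InChain k lam r s ↔ InChain (k + 1) lam r s := by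
  constructor
  · intro h
    induction h with
    | refl => exact .refl
    | step h1 h2 ih => exact .step ih ((kcb_iff k lam hcore _ _).1 h2)
  · intro h
    induction h with
    | refl => exact .refl
    | step h1 h2 ih => exact .step ih ((kcb_iff k lam hcore _ _).2 h2)

lemma iCC_eq (k : ℕ) (lam : KPartition) (hcore : IsCore (k + 1) lam)
    (top bot : ℕ) (ct cb : Bool) :
    iCC k lam top bot ct cb = iCC (k + 1) lam top bot ct cb := by
  unfold iCC
  have hset : {s : ℕ | InChain k lam top s ∧ (if cb then bot ≤ s else bot < s) ∧
      (ct = true ∨ s ≠ top)} = {s : ℕ | InChain (k + 1) lam top s ∧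
      (if cb then bot ≤ s else bot < s) ∧ (ct = true ∨ s ≠ top)} := by
    ext s
    simp only [Set.mem_setOf_eq]
    rw [inchain_iff k lam hcore]
  rw [hset]

lemma chargeStepVal_eq (k : ℕ) (sh : KPartition) (hcore : IsCore (k + 1) sh) (r r' : ℕ) :
    chargeStepVal k sh r r' = chargeStepVal (k + 1) sh r r' := by
  unfold chargeStepVal
  split <;> rw [iCC_eq k sh hcore]

lemma cochargeStepVal_eq (k : ℕ) (sh : KPartition) (hcore : IsCore (k + 1) sh) (r r' : ℕ) :
    cochargeStepVal k sh r r' = cochargeStepVal (k + 1) sh r r' := by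
  unfold cochargeStepVal
  split <;> rw [iCC_eq k sh hcore]

lemma chargeLet_eq (k N : ℕ) (T : ℕ → KPartition) (hc : ∀ n ≤ N, IsCore (k + 1) (T n)) :
    ∀ m, m ≤ N → chargeLet k T m = chargeLet (k + 1) T m
  | 0, _ => rfl
  | 1, _ => rfl
  | (n + 2), h => by
    rw [chargeLet, chargeLet, chargeLet_eq k N T hc (n + 1) (by omega),
      chargeStepVal_eq k (T (n + 1)) (hc (n + 1) (by omega))]

lemma cochargeLet_eq (k N : ℕ) (T : ℕ → KPartition) (hc : ∀ n ≤ N, IsCore (k + 1) (T n)) :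
    ∀ m, m ≤ N → cochargeLet k T m = cochargeLet (k + 1) T m
  | 0, _ => rfl
  | 1, _ => rfl
  | (n + 2), h => by
    rw [cochargeLet, cochargeLet, cochargeLet_eq k N T hc (n + 1) (by omega),
      cochargeStepVal_eq k (T (n + 1)) (hc (n + 1) (by omega))]


/-- in a (k+1)-core, k-connectedness and (k+1)-connectedness agree;
hence charge and cocharge of a standard k-tableau are the same for parameters k
and k+1. -/
theorem connectivity_and_charge_k_kp1 (k : ℕ) (hk : 2 ≤ k) :
    (∀ lam : KPartition, IsCore (k + 1) lam → ∀ r r' : ℕ,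
      (KConnectedBelow k lam r r' ↔ KConnectedBelow (k + 1) lam r r')) ∧
    (∀ (N : ℕ) (T : ℕ → KPartition), IsStdKTableau k N T →
      cochargeTab k T N = cochargeTab (k + 1) T N ∧
      chargeTab k T N = chargeTab (k + 1) T N) := by
  refine ⟨fun lam hc r r' => kcb_iff k lam hc r r', fun N T hT => ?_⟩
  obtain ⟨-, hc, -⟩ := hT
  constructor
  · unfold cochargeTab
    exact Finset.sum_congr rfl fun n hn =>
      cochargeLet_eq k N T hc (n + 1) (by simpa using Finset.mem_range.1 hn)
  · unfold chargeTab
    exact Finset.sum_congr rfl fun n hn =>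
      chargeLet_eq k N T hc (n + 1) (by simpa using Finset.mem_range.1 hn)
end
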